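/- Fix matrices A ∈ ℝ^{n×n}, B^L ∈ ℝ^{n×r^L}, B^F ∈ ℝ^{n×r^F}, and symmetric matrices Q ⪰ 0, Q_f ⪰ 0, R ≻ 0 of appropriate sizes. For M ∈ ℝ^{r^F×n} define Ã(M) = A + B^F M A and B̃(M) = B^L + B^F M B^L. Define the backward Riccati recursion P_T(M) = Q_f and P_t(M) = Q + Ã(M)ᵀ P_{t+1}(M) Ã(M) − Ã(M)ᵀ P_{t+1}(M) B̃(M) (R + B̃(M)ᵀ P_{t+1}(M) B̃(M))^{-1} B̃(M)ᵀ P_{t+1}(M) Ã(M). Then for every t and every (i,j), the entry (P_t(M))_{ij} is a rational function of the entries of M: there exist polynomials p_{t,ij} and q_t in the entries of M with q_t(M) > 0 for all M, such that (P_t(M))_{ij} = p_{t,ij}(M)/q_t(M). -/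

import Mathlib

open Matrix MvPolynomial

namespace Prop1Aux

variable {rF n : ℕ}

/-- evaluation of a polynomial at the entries of `M`. -/
noncomputable def ev (M : Matrix (Fin rF) (Fin n) ℝ) (p : MvPolynomial (Fin rF × Fin n) ℝ) : ℝ :=
  MvPolynomial.eval (fun x => M x.1 x.2) p

/-- `f` is a rational function of the entries with everywhere-positive denominator. -/
def IsRat (f : Matrix (Fin rF) (Fin n) ℝ → ℝ) : Prop :=
  ∃ p q : MvPolynomial (Fin rF × Fin n) ℝ,
    (∀ M, 0 < ev M q) ∧ ∀ M, f M = ev M p / ev M q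

lemma isRat_const (c : ℝ) : IsRat (fun _ : Matrix (Fin rF) (Fin n) ℝ => c) :=
  ⟨MvPolynomial.C c, 1, fun M => by simp [ev], fun M => by simp [ev]⟩

lemma isRat_entry (i : Fin rF) (j : Fin n) : IsRat (fun M : Matrix (Fin rF) (Fin n) ℝ => M i j) :=
  ⟨MvPolynomial.X (i, j), 1, fun M => by simp [ev], fun M => by simp [ev]⟩

lemma IsRat.add {f g : Matrix (Fin rF) (Fin n) ℝ → ℝ} (hf : IsRat f) (hg : IsRat g) :
    IsRat (fun M => f M + g M) := by
  obtain ⟨p1, q1, h1, e1⟩ := hf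
  obtain ⟨p2, q2, h2, e2⟩ := hg
  refine ⟨p1 * q2 + p2 * q1, q1 * q2, fun M => by
    simpa [ev] using mul_pos (h1 M) (h2 M), fun M => ?_⟩
  have hq1 := (h1 M).ne'
  have hq2 := (h2 M).ne'
  simp only [ev, map_add, _root_.map_mul] at *
  rw [e1 M, e2 M]
  field_simp

lemma IsRat.mul {f g : Matrix (Fin rF) (Fin n) ℝ → ℝ} (hf : IsRat f) (hg : IsRat g) :
    IsRat (fun M => f M * g M) := by
  obtain ⟨p1, q1, h1, e1⟩ := hf
  obtain ⟨p2, q2, h2, e2⟩ := hg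
  refine ⟨p1 * p2, q1 * q2, fun M => by
    simpa [ev] using mul_pos (h1 M) (h2 M), fun M => ?_⟩
  simp only [ev, _root_.map_mul] at *
  rw [e1 M, e2 M, div_mul_div_comm]

lemma IsRat.neg {f : Matrix (Fin rF) (Fin n) ℝ → ℝ} (hf : IsRat f) :
    IsRat (fun M => -(f M)) := by
  obtain ⟨p, q, h, e⟩ := hf
  exact ⟨-p, q, h, fun M => by simp [ev, e M, neg_div]⟩

lemma IsRat.sub {f g : Matrix (Fin rF) (Fin n) ℝ → ℝ} (hf : IsRat f) (hg : IsRat g) :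
    IsRat (fun M => f M - g M) := by
  simpa [sub_eq_add_neg] using hf.add hg.neg

lemma IsRat.div {f g : Matrix (Fin rF) (Fin n) ℝ → ℝ} (hf : IsRat f) (hg : IsRat g)
    (hpos : ∀ M, 0 < g M) : IsRat (fun M => f M / g M) := by
  obtain ⟨p1, q1, h1, e1⟩ := hf
  obtain ⟨p2, q2, h2, e2⟩ := hg
  refine ⟨p1 * q2, q1 * p2, fun M => ?_, fun M => ?_⟩
  · have hp2 : 0 < ev M p2 := by
      have := hpos M
      rw [e2 M] at this
      exact (div_pos_iff.mp this).resolve_right (fun h => absurd (h2 M) (not_lt.mpr h.2.le)) |>.1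
    simpa [ev] using mul_pos (h1 M) hp2
  · simp only [ev, _root_.map_mul] at *
    rw [e1 M, e2 M]
    have hq1 := (h1 M).ne'
    have hq2 := (h2 M).ne'
    field_simp

lemma IsRat.finsetSum {ι : Type*} (s : Finset ι) (f : ι → Matrix (Fin rF) (Fin n) ℝ → ℝ)
    (h : ∀ i ∈ s, IsRat (f i)) : IsRat (fun M => ∑ i ∈ s, f i M) := by
  induction s using Finset.cons_induction with
  | empty => simpa using isRat_const 0
  | cons a s ha ih =>
      simp only [Finset.sum_cons]
      exact (h a (Finset.mem_cons_self a s)).add (ih fun i hi => h i (Finset.mem_cons_of_mem hi))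

lemma IsRat.finsetProd {ι : Type*} (s : Finset ι) (f : ι → Matrix (Fin rF) (Fin n) ℝ → ℝ)
    (h : ∀ i ∈ s, IsRat (f i)) : IsRat (fun M => ∏ i ∈ s, f i M) := by
  induction s using Finset.cons_induction with
  | empty => simpa using isRat_const 1
  | cons a s ha ih =>
      simp only [Finset.prod_cons]
      exact (h a (Finset.mem_cons_self a s)).mul (ih fun i hi => h i (Finset.mem_cons_of_mem hi))

/-- matrix-valued rational functions -/
def MRat {I J : Type*} (F : Matrix (Fin rF) (Fin n) ℝ → Matrix I J ℝ) : Prop :=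
  ∀ i j, IsRat (fun M => F M i j)

lemma MRat.const {I J : Type*} (C : Matrix I J ℝ) :
    MRat (fun _ : Matrix (Fin rF) (Fin n) ℝ => C) := fun i j => isRat_const (C i j)

lemma mRat_id : MRat (fun M : Matrix (Fin rF) (Fin n) ℝ => M) := fun i j => isRat_entry i j

lemma MRat.add {I J : Type*} {F G : Matrix (Fin rF) (Fin n) ℝ → Matrix I J ℝ}
    (hF : MRat F) (hG : MRat G) : MRat (fun M => F M + G M) := fun i j => by
  simpa [Matrix.add_apply] using (hF i j).add (hG i j)

lemma MRat.sub {I J : Type*} {F G : Matrix (Fin rF) (Fin n) ℝ → Matrix I J ℝ}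
    (hF : MRat F) (hG : MRat G) : MRat (fun M => F M - G M) := fun i j => by
  simpa [Matrix.sub_apply] using (hF i j).sub (hG i j)

lemma MRat.mul {I J K : Type*} [Fintype J] {F : Matrix (Fin rF) (Fin n) ℝ → Matrix I J ℝ}
    {G : Matrix (Fin rF) (Fin n) ℝ → Matrix J K ℝ} (hF : MRat F) (hG : MRat G) :
    MRat (fun M => F M * G M) := fun i j => by
  simp only [Matrix.mul_apply]
  exact IsRat.finsetSum _ _ fun k _ => (hF i k).mul (hG k j)

lemma MRat.transpose {I J : Type*} {F : Matrix (Fin rF) (Fin n) ℝ → Matrix I J ℝ}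
    (hF : MRat F) : MRat (fun M => (F M)ᵀ) := fun i j => hF j i

lemma MRat.det {I : Type*} [Fintype I] [DecidableEq I]
    {F : Matrix (Fin rF) (Fin n) ℝ → Matrix I I ℝ} (hF : MRat F) :
    IsRat (fun M => (F M).det) := by
  have : (fun M => (F M).det) =
      fun M : Matrix (Fin rF) (Fin n) ℝ =>
        ∑ σ : Equiv.Perm I, ((Equiv.Perm.sign σ : ℤ) : ℝ) * ∏ i, F M (σ i) i := by
    funext M
    rw [Matrix.det_apply]
    simp [Units.smul_def, zsmul_eq_mul]
  rw [this]
  exact IsRat.finsetSum _ _ fun σ _ =>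
    (isRat_const _).mul (IsRat.finsetProd _ _ fun i _ => hF (σ i) i)

lemma MRat.updateRow {I : Type*} [DecidableEq I]
    {F : Matrix (Fin rF) (Fin n) ℝ → Matrix I I ℝ} (hF : MRat F) (j : I) (v : I → ℝ) :
    MRat (fun M => (F M).updateRow j v) := by
  intro k l
  by_cases h : k = j
  · subst h; simpa [Matrix.updateRow_apply] using isRat_const (v l)
  · simpa [Matrix.updateRow_apply, h] using hF k l

lemma MRat.inv {I : Type*} [Fintype I] [DecidableEq I]
    {F : Matrix (Fin rF) (Fin n) ℝ → Matrix I I ℝ} (hF : MRat F)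
    (hdet : ∀ M, 0 < (F M).det) : MRat (fun M => (F M)⁻¹) := by
  intro i j
  have : (fun M => (F M)⁻¹ i j) =
      fun M : Matrix (Fin rF) (Fin n) ℝ => ((F M).adjugate i j) / (F M).det := by
    funext M
    rw [Matrix.inv_def, Ring.inverse_eq_inv]
    simp [Matrix.smul_apply, div_eq_inv_mul]
  rw [this]
  refine IsRat.div ?_ (hF.det) hdet
  have : (fun M => (F M).adjugate i j) =
      fun M : Matrix (Fin rF) (Fin n) ℝ => ((F M).updateRow j (Pi.single i 1)).det := by
    funext M; rw [Matrix.adjugate_apply]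
  rw [this]
  exact MRat.det (hF.updateRow j (Pi.single i 1))

end Prop1Aux


lemma psd_step {n rL : ℕ} {Q : Matrix (Fin n) (Fin n) ℝ} {R : Matrix (Fin rL) (Fin rL) ℝ}
    (hQ : Q.PosSemidef) (hR : R.PosDef)
    (P : Matrix (Fin n) (Fin n) ℝ) (hP : P.PosSemidef)
    (At : Matrix (Fin n) (Fin n) ℝ) (Bt : Matrix (Fin n) (Fin rL) ℝ) :
    (Q + Atᵀ * P * At -
      Atᵀ * P * Bt * (R + Btᵀ * P * Bt)⁻¹ * Btᵀ * P * At).PosSemidef := by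
  have hPt : Pᵀ = P := by
    have := hP.isHermitian.eq
    rwa [conjTranspose_eq_transpose_of_trivial] at this
  have hBPB : (Btᵀ * P * Bt).PosSemidef := by
    have := hP.conjTranspose_mul_mul_same Bt
    rwa [conjTranspose_eq_transpose_of_trivial] at this
  have hS : (R + Btᵀ * P * Bt).PosDef := hR.add_posSemidef hBPB
  haveI : Invertible (R + Btᵀ * P * Bt) :=
    (R + Btᵀ * P * Bt).invertibleOfIsUnitDet hS.det_pos.ne'.isUnit
  set S := R + Btᵀ * P * Bt with hSdef
  -- block matrix is PSD
  have e1 : (fromCols At Bt)ᵀ * P * (fromCols At Bt) =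
      fromBlocks (Atᵀ * P * At) (Atᵀ * P * Bt) (Btᵀ * P * At) (Btᵀ * P * Bt) := by
    rw [transpose_fromCols, Matrix.fromRows_mul, fromRows_mul_fromCols]
  have e2 : (fromCols (0 : Matrix (Fin rL) (Fin n) ℝ) (1 : Matrix (Fin rL) (Fin rL) ℝ))ᵀ * R *
        (fromCols (0 : Matrix (Fin rL) (Fin n) ℝ) (1 : Matrix (Fin rL) (Fin rL) ℝ)) =
      fromBlocks 0 0 0 R := by
    rw [transpose_fromCols, Matrix.fromRows_mul, fromRows_mul_fromCols]
    simp
  have key : fromBlocks (Atᵀ * P * At) (Atᵀ * P * Bt) (Btᵀ * P * At) S =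
      (fromCols At Bt)ᵀ * P * (fromCols At Bt) +
      (fromCols (0 : Matrix (Fin rL) (Fin n) ℝ) (1 : Matrix (Fin rL) (Fin rL) ℝ))ᵀ * R *
        (fromCols (0 : Matrix (Fin rL) (Fin n) ℝ) (1 : Matrix (Fin rL) (Fin rL) ℝ)) := by
    rw [e1, e2, fromBlocks_add]
    simp [hSdef, add_comm]
  have hblock : (fromBlocks (Atᵀ * P * At) (Atᵀ * P * Bt) (Btᵀ * P * At) S).PosSemidef := by
    rw [key]
    refine Matrix.PosSemidef.add ?_ ?_
    · have := hP.conjTranspose_mul_mul_same (fromCols At Bt)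
      rwa [conjTranspose_eq_transpose_of_trivial] at this
    · have := hR.posSemidef.conjTranspose_mul_mul_same
        (fromCols (0 : Matrix (Fin rL) (Fin n) ℝ) (1 : Matrix (Fin rL) (Fin rL) ℝ))
      rwa [conjTranspose_eq_transpose_of_trivial] at this
  have hconj : (Atᵀ * P * Bt)ᴴ = Btᵀ * P * At := by
    rw [conjTranspose_eq_transpose_of_trivial]
    simp [Matrix.transpose_mul, hPt, Matrix.mul_assoc]
  rw [← hconj] at hblock
  have hschur := (Matrix.PosDef.fromBlocks₂₂ (Atᵀ * P * At) (Atᵀ * P * Bt) hS).mp hblock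
  rw [hconj] at hschur
  have : Q + Atᵀ * P * At - Atᵀ * P * Bt * S⁻¹ * Btᵀ * P * At =
      Q + (Atᵀ * P * At - Atᵀ * P * Bt * S⁻¹ * (Btᵀ * P * At)) := by
    rw [add_sub_assoc]
    simp only [Matrix.mul_assoc]
  rw [this]
  exact hQ.add (by simpa [Matrix.mul_assoc] using hschur)

/-- Proposition 1: every entry of the Riccati matrices `P_t(M)` of the parameterized LQG
problem (with `Ã(M) = A + B^F M A`, `B̃(M) = B^L + B^F M B^L`) is a rational function of
the entries of `M`, with a denominator polynomial that is positive for every `M`. -/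
theorem stmt_10 {n rL rF : ℕ} (A : Matrix (Fin n) (Fin n) ℝ)
    (BL : Matrix (Fin n) (Fin rL) ℝ) (BF : Matrix (Fin n) (Fin rF) ℝ)
    (Q Qf : Matrix (Fin n) (Fin n) ℝ) (R : Matrix (Fin rL) (Fin rL) ℝ)
    (hQ : Q.PosSemidef) (hQf : Qf.PosSemidef) (hR : R.PosDef) (T : ℕ)
    (P : ℕ → Matrix (Fin rF) (Fin n) ℝ → Matrix (Fin n) (Fin n) ℝ)
    (hPT : ∀ M, P T M = Qf)
    (hrec : ∀ t, t < T → ∀ M : Matrix (Fin rF) (Fin n) ℝ,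
      P t M =
        Q + (A + BF * M * A)ᵀ * P (t + 1) M * (A + BF * M * A) -
          (A + BF * M * A)ᵀ * P (t + 1) M * (BL + BF * M * BL) *
            (R + (BL + BF * M * BL)ᵀ * P (t + 1) M * (BL + BF * M * BL))⁻¹ *
            (BL + BF * M * BL)ᵀ * P (t + 1) M * (A + BF * M * A)) :
    ∀ t ≤ T, ∃ q : MvPolynomial (Fin rF × Fin n) ℝ,
      (∀ M : Matrix (Fin rF) (Fin n) ℝ,
        0 < MvPolynomial.eval (fun x => M x.1 x.2) q) ∧
      ∀ i j : Fin n, ∃ p : MvPolynomial (Fin rF × Fin n) ℝ,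
        ∀ M : Matrix (Fin rF) (Fin n) ℝ,
          P t M i j = MvPolynomial.eval (fun x => M x.1 x.2) p /
            MvPolynomial.eval (fun x => M x.1 x.2) q := by
  intro t ht
  -- positive-definiteness helper
  have s_posdef : ∀ (Pm : Matrix (Fin n) (Fin n) ℝ), Pm.PosSemidef →
      ∀ Bt : Matrix (Fin n) (Fin rL) ℝ, (R + Btᵀ * Pm * Bt).PosDef := by
    intro Pm hPm Bt
    have := hPm.conjTranspose_mul_mul_same Bt
    rw [conjTranspose_eq_transpose_of_trivial] at this
    exact hR.add_posSemidef this
  -- main backwards induction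
  have good : ∀ k t', t' + k = T →
      (∀ M, (P t' M).PosSemidef) ∧ Prop1Aux.MRat (P t') := by
    intro k
    induction k with
    | zero =>
        intro t' ht'
        have hT : t' = T := by omega
        subst hT
        refine ⟨fun M => by rw [hPT]; exact hQf, fun i j => ?_⟩
        have : (fun M => P t' M i j) = fun _ : Matrix (Fin rF) (Fin n) ℝ => Qf i j :=
          funext fun M => by rw [hPT]
        rw [this]
        exact Prop1Aux.isRat_const _
    | succ k ih =>
        intro t' ht'
        obtain ⟨hpsd1, hrat1⟩ := ih (t' + 1) (by omega)
        have htT : t' < T := by omega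
        constructor
        · intro M
          rw [hrec t' htT M]
          exact psd_step hQ hR (P (t' + 1) M) (hpsd1 M) (A + BF * M * A) (BL + BF * M * BL)
        · have hAt : Prop1Aux.MRat (fun M : Matrix (Fin rF) (Fin n) ℝ => A + BF * M * A) :=
            (Prop1Aux.MRat.const A).add (((Prop1Aux.MRat.const BF).mul Prop1Aux.mRat_id).mul
              (Prop1Aux.MRat.const A))
          have hBt : Prop1Aux.MRat (fun M : Matrix (Fin rF) (Fin n) ℝ => BL + BF * M * BL) :=
            (Prop1Aux.MRat.const BL).add (((Prop1Aux.MRat.const BF).mul Prop1Aux.mRat_id).mul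
              (Prop1Aux.MRat.const BL))
          have hS : Prop1Aux.MRat (fun M : Matrix (Fin rF) (Fin n) ℝ =>
              R + (BL + BF * M * BL)ᵀ * P (t' + 1) M * (BL + BF * M * BL)) :=
            (Prop1Aux.MRat.const R).add ((hBt.transpose.mul hrat1).mul hBt)
          have hdet : ∀ M : Matrix (Fin rF) (Fin n) ℝ,
              0 < (R + (BL + BF * M * BL)ᵀ * P (t' + 1) M * (BL + BF * M * BL)).det :=
            fun M => (s_posdef (P (t' + 1) M) (hpsd1 M) (BL + BF * M * BL)).det_pos
          have hSinv := hS.inv hdet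
          have hwhole : Prop1Aux.MRat (fun M : Matrix (Fin rF) (Fin n) ℝ =>
              Q + (A + BF * M * A)ᵀ * P (t' + 1) M * (A + BF * M * A) -
                (A + BF * M * A)ᵀ * P (t' + 1) M * (BL + BF * M * BL) *
                  (R + (BL + BF * M * BL)ᵀ * P (t' + 1) M * (BL + BF * M * BL))⁻¹ *
                  (BL + BF * M * BL)ᵀ * P (t' + 1) M * (A + BF * M * A)) :=
            ((Prop1Aux.MRat.const Q).add ((hAt.transpose.mul hrat1).mul hAt)).sub
              ((((((hAt.transpose.mul hrat1).mul hBt).mul hSinv).mul hBt.transpose).mul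
                hrat1).mul hAt)
          have : (fun M => P t' M) = _ := funext fun M => hrec t' htT M
          rw [show P t' = fun M => P t' M from rfl, this]
          exact hwhole
  obtain ⟨hpsd, hrat⟩ := good (T - t) t (by omega)
  choose p q hqpos hval using fun ij : Fin n × Fin n => hrat ij.1 ij.2
  refine ⟨∏ x : Fin n × Fin n, q x, fun M => ?_, fun i j => ?_⟩
  · rw [map_prod]
    exact Finset.prod_pos fun x _ => hqpos x M
  · refine ⟨p (i, j) * ∏ x ∈ Finset.univ.erase (i, j), q x, fun M => ?_⟩
    have hv := hval (i, j) M
    simp only [Prop1Aux.ev] at hv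
    rw [hv, _root_.map_mul, map_prod, map_prod,
      ← Finset.mul_prod_erase Finset.univ
        (fun x => MvPolynomial.eval (fun y => M y.1 y.2) (q x)) (Finset.mem_univ (i, j))]
    have hrest : (∏ x ∈ Finset.univ.erase (i, j),
        MvPolynomial.eval (fun y => M y.1 y.2) (q x)) ≠ 0 :=
      (Finset.prod_pos fun x _ => hqpos x M).ne'
    rw [mul_div_mul_right _ _ hrest]
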